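/- Let X be an n-element set with n = 2l+1 odd, and suppose G is a 2-generator for X with |G| ≤ 3·2^l − 2. Then the number of edges of the disjointness graph H restricted to G satisfies e(H[G]) ≥ 2^{2l+1} − |G| − 1, and consequently the edge density of H[G] exceeds 4/9. -/

import Mathlib

/-- for n = 2l+1 odd and G a 2-generator with |G| ≤ 3·2^l − 2,
the induced disjointness graph H[G] has at least 2^{2l+1} − |G| − 1 edges, and
edge density exceeding 4/9. -/
theorem stmt13 (l : ℕ) (hl : 1 ≤ l) (n : ℕ) (hn : n = 2 * l + 1)
    (G : Finset (Finset (Fin n)))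
    (hgen : ∀ x : Finset (Fin n), ∃ S ⊆ G, S.card ≤ 2 ∧
      (S : Set (Finset (Fin n))).PairwiseDisjoint id ∧ x = S.sup id)
    (hcard : G.card ≤ 3 * 2 ^ l - 2) :
    (2 : ℝ) ^ (2 * l + 1) - (G.card : ℝ) - 1
      ≤ (Nat.card ((SimpleGraph.fromRel
          (fun x y : Finset (Fin n) => Disjoint x y)).induce
            (↑G : Set (Finset (Fin n)))).edgeSet : ℝ) ∧
    (4 / 9 : ℝ)
      < (Nat.card ((SimpleGraph.fromRel
          (fun x y : Finset (Fin n) => Disjoint x y)).induce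
            (↑G : Set (Finset (Fin n)))).edgeSet : ℝ) / (G.card.choose 2 : ℝ) := by
  classical
  set H := (SimpleGraph.fromRel (fun x y : Finset (Fin n) => Disjoint x y)).induce
      (↑G : Set (Finset (Fin n))) with hH
  set E := H.edgeSet with hE
  choose S hSsub hScard hSdisj hSsup using hgen
  -- injection x ↦ S x into powerset of G gives 2^n ≤ 2^m
  have hinj : Function.Injective S := by
    intro x y hxy
    rw [hSsup x, hSsup y, hxy]
  have hpow : 2 ^ n ≤ 2 ^ G.card := by
    have h1 : (Finset.univ : Finset (Finset (Fin n))).card ≤ G.powerset.card := by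
      apply Finset.card_le_card_of_injOn S
      · intro x _; exact Finset.mem_powerset.mpr (hSsub x)
      · intro a _ b _ h; exact hinj h
    simpa [Finset.card_powerset, Fintype.card_finset] using h1
  have hm3 : 3 ≤ G.card := by
    have : n ≤ G.card := (Nat.pow_le_pow_iff_right (le_refl 2)).mp hpow
    omega
  -- the set of subsets requiring an edge
  set D : Finset (Finset (Fin n)) := Finset.univ \ insert ∅ G with hD
  -- for each x ∈ D, S x has exactly two elements
  have hkey : ∀ x ∈ D, ∃ (A B : Finset (Fin n)), A ∈ G ∧ B ∈ G ∧ A ≠ B ∧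
      Disjoint A B ∧ A ∪ B = x := by
    intro x hx
    simp only [hD, Finset.mem_sdiff, Finset.mem_insert, Finset.mem_univ, true_and,
      not_or] at hx
    obtain ⟨hxne, hxG⟩ := hx
    have h2 : (S x).card = 2 := by
      have hle := hScard x
      interval_cases h : (S x).card
      · exfalso; apply hxne
        rw [hSsup x, Finset.card_eq_zero.mp h]; rfl
      · exfalso
        obtain ⟨A, hA⟩ := Finset.card_eq_one.mp h
        apply hxG
        have : x = A := by rw [hSsup x, hA]; simp
        rw [this]
        exact hSsub x (by rw [hA]; simp)
      · rfl
    obtain ⟨A, B, hAB, hSx⟩ := Finset.card_eq_two.mp h2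
    refine ⟨A, B, hSsub x (by rw [hSx]; simp), hSsub x (by rw [hSx]; simp), hAB, ?_, ?_⟩
    · exact hSdisj x (by rw [hSx]; simp) (by rw [hSx]; simp) hAB
    · rw [hSsup x, hSx]
      simp [Finset.sup_insert, Finset.sup_singleton]
  choose A B hAG hBG hABne hABdisj hABun using hkey
  -- map D into edges
  have hmap : ∀ (x : Finset (Fin n)) (hx : x ∈ D),
      (s(⟨A x hx, hAG x hx⟩, ⟨B x hx, hBG x hx⟩) :
        Sym2 (↑G : Set (Finset (Fin n)))) ∈ E := by
    intro x hx
    rw [hE, SimpleGraph.mem_edgeSet, hH]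
    have h : (SimpleGraph.fromRel (fun x y : Finset (Fin n) => Disjoint x y)).Adj
        (A x hx) (B x hx) :=
      (SimpleGraph.fromRel_adj _ _ _).mpr ⟨hABne x hx, Or.inl (hABdisj x hx)⟩
    exact h
  set f : {x // x ∈ D} → E := fun x =>
    ⟨s(⟨A x.1 x.2, hAG x.1 x.2⟩, ⟨B x.1 x.2, hBG x.1 x.2⟩), hmap x.1 x.2⟩ with hf
  -- "union" function on edges
  set U : Sym2 (↑G : Set (Finset (Fin n))) → Finset (Fin n) :=
    Sym2.lift ⟨fun a b => a.1 ∪ b.1, fun a b => Finset.union_comm _ _⟩ with hU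
  have hfinj : Function.Injective f := by
    intro x y hxy
    have : U (f x).1 = U (f y).1 := by rw [hxy]
    simp only [hf, hU, Sym2.lift_mk] at this
    apply Subtype.ext
    rw [← hABun x.1 x.2, ← hABun y.1 y.2]
    exact this
  have hcardD : D.card ≤ Nat.card E := by
    have := Nat.card_le_card_of_injective f hfinj
    simpa [Nat.card_eq_finsetCard] using this
  have hDcard : D.card + (insert ∅ G).card = 2 ^ n := by
    rw [hD, Finset.card_sdiff_of_subset (Finset.subset_univ _)]
    have h1 : (insert ∅ G).card ≤ (Finset.univ : Finset (Finset (Fin n))).card :=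
      Finset.card_le_card (Finset.subset_univ _)
    have h2 : (Finset.univ : Finset (Finset (Fin n))).card = 2 ^ n := by
      simp [Fintype.card_finset]
    omega
  have hins : (insert ∅ G).card ≤ G.card + 1 := Finset.card_insert_le _ _
  have hmain : 2 ^ n ≤ Nat.card E + G.card + 1 := by omega
  -- real versions
  have hmainR : (2 : ℝ) ^ (2 * l + 1) - (G.card : ℝ) - 1 ≤ (Nat.card E : ℝ) := by
    have h0' : (2:ℕ) ^ (2 * l + 1) = 2 ^ n := by rw [hn]
    have h0 : (2:ℕ) ^ (2 * l + 1) ≤ Nat.card E + G.card + 1 := h0' ▸ hmain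
    have h1 : ((2 ^ (2 * l + 1) : ℕ) : ℝ) ≤ ((Nat.card E + G.card + 1 : ℕ) : ℝ) := by
      exact_mod_cast h0
    push_cast at h1
    linarith
  refine ⟨hmainR, ?_⟩
  -- density
  have hchoose : (G.card.choose 2 : ℝ) = G.card * (G.card - 1) / 2 :=
    Nat.cast_choose_two (K := ℝ) G.card
  have hchoosepos : (0 : ℝ) < (G.card.choose 2 : ℝ) := by
    rw [hchoose]
    have : (3 : ℝ) ≤ G.card := by exact_mod_cast hm3
    nlinarith
  rw [lt_div_iff₀ hchoosepos]
  rw [hchoose]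
  have hmR : (G.card : ℝ) ≤ 3 * 2 ^ l - 2 := by
    have h32 : (2 : ℕ) ≤ 3 * 2 ^ l := by
      have := Nat.one_le_two_pow (n := l); omega
    have : (G.card : ℝ) ≤ ((3 * 2 ^ l - 2 : ℕ) : ℝ) := by exact_mod_cast hcard
    rw [Nat.cast_sub h32] at this
    push_cast at this
    linarith
  have ht : (2 : ℝ) ≤ 2 ^ l := by
    calc (2:ℝ) = 2 ^ 1 := by norm_num
    _ ≤ 2 ^ l := by apply pow_le_pow_right₀ (by norm_num) hl
  have hpow2 : (2 : ℝ) ^ (2 * l + 1) = 2 * (2 ^ l) ^ 2 := by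
    rw [pow_succ, two_mul, pow_add]
    ring
  have hm3R : (3 : ℝ) ≤ G.card := by exact_mod_cast hm3
  set m : ℝ := (G.card : ℝ)
  set t : ℝ := (2 : ℝ) ^ l
  have hnum : 4 / 9 * (m * (m - 1) / 2) < 2 * t ^ 2 - m - 1 := by
    nlinarith [sq_nonneg (m - (3 * t - 2)), sq_nonneg t]
  calc 4 / 9 * (m * (m - 1) / 2) < 2 * t ^ 2 - m - 1 := hnum
    _ = (2:ℝ) ^ (2 * l + 1) - m - 1 := by rw [hpow2]
    _ ≤ (Nat.card E : ℝ) := hmainR
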